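/- arXiv:1310.6011 — 2 statements merged into one kernel-verified Lean document; each statement's English description precedes it below -/
import Mathlib

section
/- Let N, M, D, K be positive integers with M ≥ N, and let p_0, …, p_{M−1} be distinct nonzero complex numbers. Let V ∈ ℂ^{N×M} be the Vandermonde matrix with entries V_{n,m} = p_m^n (0 ≤ n < N, 0 ≤ m < M), let S ∈ ℂ^{M×N} be an injective matrix each of whose columns has at most D nonzero entries, and let Λ ∈ ℂ^{N×N} be an invertible diagonal matrix. Set Ψ = Λ V S. If c, c′ ∈ ℂ^N each have at most K nonzero entries and (Ψc)_n = (Ψc′)_n for all n in a block of 2DK consecutive indices {ℓ, ℓ+1, …, ℓ+2DK−1} ⊆ {0, …, N−1}, then c = c′. In other words, a K-sparse vector c is uniquely determined by any 2DK consecutive entries of Ψc. -/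
open scoped Classical

/-- The number of nonzero entries (the "ℓ₀ norm") of a vector. -/
noncomputable def l0 {ι : Type*} [Fintype ι] (x : ι → ℂ) : ℕ :=
  (Finset.univ.filter (fun i => x i ≠ 0)).card

/-- **Generalized Prony recovery.** Let `Ψ = Λ V S` with `Λ` an invertible diagonal matrix,
`V` the `N × M` Vandermonde matrix generated by distinct nonzero nodes `p 0, …, p (M-1)`
(`M ≥ N`), and `S` an injective `M × N` matrix whose columns have at most `D` nonzero entries.
If `c, c'` each have at most `K` nonzero entries and `Ψ c` agrees with `Ψ c'` on a block of
`2 D K` consecutive indices contained in `{0, …, N-1}`, then `c = c'`. -/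
theorem stmt17 (N M D K : ℕ) (hN : 1 ≤ N) (hM : N ≤ M) (hD : 1 ≤ D) (hK : 1 ≤ K)
    (p : Fin M → ℂ) (hp : ∀ m, p m ≠ 0) (hpinj : Function.Injective p)
    (V : Matrix (Fin N) (Fin M) ℂ) (hV : ∀ n m, V n m = p m ^ (n : ℕ))
    (S : Matrix (Fin M) (Fin N) ℂ) (hSinj : Function.Injective S.mulVec)
    (hScol : ∀ j : Fin N, (Finset.univ.filter (fun i => S i j ≠ 0)).card ≤ D)
    (L : Fin N → ℂ) (hL : ∀ n, L n ≠ 0)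
    (Ψ : Matrix (Fin N) (Fin N) ℂ) (hΨ : Ψ = Matrix.diagonal L * V * S)
    (c c' : Fin N → ℂ) (hc : l0 c ≤ K) (hc' : l0 c' ≤ K)
    (ℓ : ℕ) (hblock : ℓ + 2 * D * K ≤ N)
    (hagree : ∀ (j : ℕ) (hj : j < 2 * D * K),
      Ψ.mulVec c ⟨ℓ + j, by omega⟩ = Ψ.mulVec c' ⟨ℓ + j, by omega⟩) :
    c = c' := by

  -- Let `d = c - c'` and `a = S d`.
  set d : Fin N → ℂ := c - c' with hd
  set a : Fin M → ℂ := S.mulVec d with ha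
  -- support of `a`
  set T : Finset (Fin M) := Finset.univ.filter (fun m => a m ≠ 0) with hT
  have hTcard : T.card ≤ 2 * D * K := by
    have hsub : T ⊆ (Finset.univ.filter (fun j => d j ≠ 0)).biUnion
        (fun j => Finset.univ.filter (fun i => S i j ≠ 0)) := by
      intro m hm
      simp only [hT, Finset.mem_filter, Finset.mem_univ, true_and] at hm
      by_contra hmem
      apply hm
      simp only [Finset.mem_biUnion, Finset.mem_filter, Finset.mem_univ, true_and,
        not_exists, not_and, not_not] at hmem
      show S.mulVec d m = 0
      unfold Matrix.mulVec dotProduct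
      apply Finset.sum_eq_zero
      intro j _
      rcases eq_or_ne (d j) 0 with h | h
      · simp [h]
      · simp [hmem j h]
    have h1 : T.card ≤ ∑ j ∈ Finset.univ.filter (fun j => d j ≠ 0),
        (Finset.univ.filter (fun i => S i j ≠ 0)).card :=
      le_trans (Finset.card_le_card hsub) (Finset.card_biUnion_le)
    have h2 : ∑ j ∈ Finset.univ.filter (fun j => d j ≠ 0),
        (Finset.univ.filter (fun i => S i j ≠ 0)).card ≤
        (Finset.univ.filter (fun j => d j ≠ 0)).card * D := by
      calc _ ≤ ∑ _j ∈ Finset.univ.filter (fun j => d j ≠ 0), D :=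
              Finset.sum_le_sum (fun j _ => hScol j)
        _ = _ := by rw [Finset.sum_const, smul_eq_mul]
    have h3 : (Finset.univ.filter (fun j => d j ≠ 0)).card ≤ 2 * K := by
      have hsub2 : Finset.univ.filter (fun j => d j ≠ 0) ⊆
          (Finset.univ.filter (fun j => c j ≠ 0)) ∪
          (Finset.univ.filter (fun j => c' j ≠ 0)) := by
        intro j hj
        simp only [Finset.mem_filter, Finset.mem_univ, true_and, Finset.mem_union] at *
        by_contra hcon
        push_neg at hcon
        apply hj
        show c j - c' j = 0
        rw [hcon.1, hcon.2, sub_zero]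
      calc _ ≤ ((Finset.univ.filter (fun j => c j ≠ 0)) ∪
              (Finset.univ.filter (fun j => c' j ≠ 0))).card := Finset.card_le_card hsub2
        _ ≤ _ + _ := Finset.card_union_le _ _
        _ ≤ K + K := Nat.add_le_add hc hc'
        _ = 2 * K := by ring
    calc T.card ≤ (Finset.univ.filter (fun j => d j ≠ 0)).card * D := le_trans h1 h2
      _ ≤ 2 * K * D := Nat.mul_le_mul_right _ h3
      _ = 2 * D * K := by ring
  -- the key moment equations
  have key : ∀ (j : ℕ), j < 2 * D * K → ∑ m, a m * p m ^ (ℓ + j) = 0 := by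
    intro j hj
    have hn : ℓ + j < N := by omega
    have h0 : Ψ.mulVec d ⟨ℓ + j, hn⟩ = 0 := by
      have := hagree j hj
      rw [hd, Matrix.mulVec_sub, Pi.sub_apply, this, sub_self]
    rw [hΨ, ← Matrix.mulVec_mulVec, ← Matrix.mulVec_mulVec, ← ha] at h0
    have h1 : V.mulVec a ⟨ℓ + j, hn⟩ = 0 := by
      rw [Matrix.mulVec_diagonal] at h0
      exact (mul_eq_zero.mp h0).resolve_left (hL _)
    rw [← h1]
    unfold Matrix.mulVec dotProduct
    apply Finset.sum_congr rfl
    intro m _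
    simp only [hV]
    ring
  -- show a = 0 via Lagrange-type argument
  have haz : a = 0 := by
    by_contra hane
    obtain ⟨m₀, hm₀⟩ : ∃ m₀, a m₀ ≠ 0 := by
      by_contra hcon
      push_neg at hcon
      exact hane (funext hcon)
    have hm₀T : m₀ ∈ T := by simp [hT, hm₀]
    set q : Polynomial ℂ := ∏ m ∈ T.erase m₀, (Polynomial.X - Polynomial.C (p m)) with hq
    have hqdeg : q.natDegree < 2 * D * K := by
      have : q.natDegree = (T.erase m₀).card := by
        rw [hq, Polynomial.natDegree_prod]
        · simp
        · intro m _
          exact Polynomial.X_sub_C_ne_zero _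
      rw [this, Finset.card_erase_of_mem hm₀T]
      have : 1 ≤ 2 * D * K := by nlinarith
      omega
    have heval : ∀ m : Fin M, Polynomial.eval (p m) q =
        ∑ i ∈ Finset.range (2 * D * K), q.coeff i * p m ^ i := by
      intro m
      exact Polynomial.eval_eq_sum_range' hqdeg _
    have hzero : ∑ m, a m * p m ^ ℓ * Polynomial.eval (p m) q = 0 := by
      calc ∑ m, a m * p m ^ ℓ * Polynomial.eval (p m) q
          = ∑ m, ∑ i ∈ Finset.range (2 * D * K),
              q.coeff i * (a m * p m ^ (ℓ + i)) := by
            apply Finset.sum_congr rfl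
            intro m _
            rw [heval, Finset.mul_sum]
            apply Finset.sum_congr rfl
            intro i _
            rw [pow_add]
            ring
        _ = ∑ i ∈ Finset.range (2 * D * K), q.coeff i * ∑ m, a m * p m ^ (ℓ + i) := by
            rw [Finset.sum_comm]
            apply Finset.sum_congr rfl
            intro i _
            rw [Finset.mul_sum]
        _ = 0 := by
            apply Finset.sum_eq_zero
            intro i hi
            rw [key i (Finset.mem_range.mp hi), mul_zero]
    have hsingle : ∑ m, a m * p m ^ ℓ * Polynomial.eval (p m) q =
        a m₀ * p m₀ ^ ℓ * Polynomial.eval (p m₀) q := by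
      rw [← Finset.sum_subset (Finset.subset_univ {m₀})]
      · simp
      · intro m _ hm
        simp only [Finset.mem_singleton] at hm
        rcases eq_or_ne (a m) 0 with h | h
        · rw [h]; ring
        · have hmT : m ∈ T.erase m₀ := by
            simp [Finset.mem_erase, hm, hT, h]
          have : Polynomial.eval (p m) q = 0 := by
            rw [hq, Polynomial.eval_prod]
            apply Finset.prod_eq_zero hmT
            simp
          rw [this]; ring
    rw [hsingle] at hzero
    have hqne : Polynomial.eval (p m₀) q ≠ 0 := by
      rw [hq, Polynomial.eval_prod]
      apply Finset.prod_ne_zero_iff.mpr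
      intro m hm
      simp only [Polynomial.eval_sub, Polynomial.eval_X, Polynomial.eval_C, sub_ne_zero]
      intro hcon
      exact (Finset.mem_erase.mp hm).1 (hpinj hcon.symm)
    have := mul_ne_zero (mul_ne_zero hm₀ (pow_ne_zero ℓ (hp m₀))) hqne
    exact this hzero
  -- conclude via injectivity of S
  have : S.mulVec d = S.mulVec 0 := by
    rw [Matrix.mulVec_zero, ← ha, haz]
  have hdz : d = 0 := hSinj this
  have := sub_eq_zero.mp (show c - c' = 0 from hdz)
  exact this
end

section
/- Let N ≥ 1 and let Ψ be the N × N DCT matrix with entries ψ_{n,m} = b(n)√(2/N) · cos(π n (m + 1/2)/N) for 0 ≤ n, m < N, where b(0) = 1/√2 and b(n) = 1 for n ≥ 1. Let K ≥ 1 with 4K ≤ N. If c, c′ ∈ ℂ^N each have at most K nonzero entries and (Ψc)_n = (Ψc′)_n for all n in a block of 4K consecutive indices {ℓ, ℓ+1, …, ℓ+4K−1} ⊆ {0, …, N−1}, then c = c′. In other words, a K-sparse vector c is uniquely determined by any 4K consecutive entries of its DCT Ψc. -/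
open scoped Classical

/-- The `N × N` DCT matrix, with entries
`ψ n m = b n * √(2/N) * cos (π n (m + 1/2) / N)`, where `b 0 = 1/√2` and `b n = 1`
for `n ≥ 1`. -/
noncomputable def dct (N : ℕ) : Matrix (Fin N) (Fin N) ℂ :=
  fun n m =>
    (((if (n : ℕ) = 0 then 1 / Real.sqrt 2 else 1) * Real.sqrt (2 / N) *
      Real.cos (Real.pi * (n : ℕ) * ((m : ℕ) + 1 / 2) / N) : ℝ) : ℂ)

open Matrix in
/-- Vandermonde uniqueness: if `f` has at most `L` nonzero entries at pairwise distinct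
nodes `x` and the first `L` moments vanish, then `f = 0`. -/
lemma aux_vand {ι : Type*} [Fintype ι] (x : ι → ℂ) (hx : Function.Injective x)
    (f : ι → ℂ) (L : ℕ) (hcard : (Finset.univ.filter (fun i => f i ≠ 0)).card ≤ L)
    (hsum : ∀ n, n < L → ∑ i, f i * x i ^ n = 0) : ∀ i, f i = 0 := by
  classical
  set S := Finset.univ.filter (fun i => f i ≠ 0) with hS
  set s := S.card with hs
  let e : {i // i ∈ S} ≃ Fin s := S.equivFin
  set y : Fin s → ℂ := fun j => x (e.symm j) with hy
  set g : Fin s → ℂ := fun j => f (e.symm j) with hg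
  have hyinj : Function.Injective y := by
    intro a b hab
    exact e.symm.injective (Subtype.coe_injective (hx hab))
  set A : Matrix (Fin s) (Fin s) ℂ := (Matrix.vandermonde y)ᵀ with hA
  have hAu : IsUnit A := by
    rw [hA, Matrix.isUnit_iff_isUnit_det, Matrix.det_transpose]
    exact (Matrix.det_vandermonde_ne_zero_iff.mpr hyinj).isUnit
  have hAg : A.mulVec g = 0 := by
    funext n
    have hn : (n : ℕ) < L := lt_of_lt_of_le n.isLt hcard
    have step1 : A.mulVec g n = ∑ j, y j ^ (n : ℕ) * g j := by
      simp [hA, Matrix.mulVec, dotProduct, Matrix.vandermonde]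
    have step2 : ∑ i : {i // i ∈ S}, x i ^ (n : ℕ) * f i = ∑ j, y j ^ (n : ℕ) * g j := by
      refine Fintype.sum_equiv e _ _ (fun i => ?_)
      simp [hy, hg]
    have step3 : ∑ i : {i // i ∈ S}, x (i : ι) ^ (n : ℕ) * f i = ∑ i ∈ S, x i ^ (n : ℕ) * f i := by
      exact Finset.sum_coe_sort S (fun i => x i ^ (n : ℕ) * f i)
    have step4 : ∑ i ∈ S, x i ^ (n : ℕ) * f i = ∑ i, x i ^ (n : ℕ) * f i := by
      refine Finset.sum_subset (S.subset_univ) (fun i _ hi => ?_)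
      have : f i = 0 := by
        by_contra hfi
        exact hi (by simp [hS, hfi])
      simp [this]
    have step5 : ∑ i, x i ^ (n : ℕ) * f i = 0 := by
      rw [← hsum (n : ℕ) hn]
      exact Finset.sum_congr rfl (fun i _ => mul_comm _ _)
    rw [step1, ← step2, step3, step4, step5]
    rfl
  have hginj : Function.Injective A.mulVec := Matrix.mulVec_injective_iff_isUnit.mpr hAu
  have hg0 : g = 0 := by
    apply hginj
    rw [hAg, Matrix.mulVec_zero]
  intro i
  by_contra hfi
  have hiS : i ∈ S := by simp [hS, hfi]
  have : g (e ⟨i, hiS⟩) = 0 := by rw [hg0]; rfl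
  apply hfi
  simpa [hg] using this

lemma exp_I_inj_aux (x y : ℝ) (hx : |x| < Real.pi) (hy : |y| < Real.pi)
    (h : Complex.exp (x * Complex.I) = Complex.exp (y * Complex.I)) : x = y := by
  rw [Complex.exp_eq_exp_iff_exists_int] at h
  obtain ⟨k, hk⟩ := h
  have h2 : ((x : ℂ) - (y + k * (2 * Real.pi))) * Complex.I = 0 := by
    rw [sub_mul, hk]; push_cast; ring
  have h3 : ((x : ℂ) - (y + k * (2 * Real.pi))) = 0 := by
    rcases mul_eq_zero.mp h2 with h | h
    · exact h
    · exact absurd h Complex.I_ne_zero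
  have h4 : (x : ℂ) = ((y + k * (2 * Real.pi) : ℝ) : ℂ) := by
    push_cast
    linear_combination h3
  have h5 : x = y + k * (2 * Real.pi) := by exact_mod_cast h4
  have hpi : 0 < Real.pi := Real.pi_pos
  have hk0 : k = 0 := by
    by_contra hkne
    have h1le : (1 : ℝ) ≤ |(k : ℝ)| := by
      have : (1 : ℤ) ≤ |k| := Int.one_le_abs hkne
      exact_mod_cast this
    have hxy : |x - y| < 2 * Real.pi := by
      have h1 := abs_lt.mp hx
      have h2' := abs_lt.mp hy
      rw [abs_lt]
      constructor <;> linarith [h1.1, h1.2, h2'.1, h2'.2]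
    have heq : |x - y| = |(k : ℝ)| * (2 * Real.pi) := by
      rw [h5, show y + k * (2*Real.pi) - y = k * (2*Real.pi) by ring,
        abs_mul, abs_of_pos (by linarith : (0:ℝ) < 2 * Real.pi)]
    nlinarith
  rw [h5, hk0]
  push_cast
  ring

lemma aux_nodes (N : ℕ) (hN : 1 ≤ N) :
    Function.Injective (fun p : Fin N × Bool =>
      Complex.exp (((if p.2 then (1:ℝ) else -1) *
        (Real.pi * ((p.1 : ℝ) + 1/2) / N)) * Complex.I)) := by
  have hN0 : (0 : ℝ) < N := by exact_mod_cast hN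
  set θ : Fin N → ℝ := fun m => Real.pi * ((m : ℝ) + 1/2) / N with hθ
  have hθpos : ∀ m : Fin N, 0 < θ m := fun m => by
    apply div_pos _ hN0
    have : (0:ℝ) ≤ (m : ℝ) := Nat.cast_nonneg _
    nlinarith [Real.pi_pos]
  have hθlt : ∀ m : Fin N, θ m < Real.pi := fun m => by
    have h1 : ((m : ℝ) + 1 ≤ N) := by exact_mod_cast m.isLt
    rw [hθ]
    rw [div_lt_iff₀ hN0]
    nlinarith [Real.pi_pos]
  have hθinj : ∀ m m' : Fin N, θ m = θ m' → m = m' := by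
    intro m m' hθeq
    rw [hθ] at hθeq
    field_simp at hθeq
    exact Fin.ext (by exact_mod_cast (by linarith : ((m : ℕ) : ℝ) = (m' : ℕ)))
  rintro ⟨m, b⟩ ⟨m', b'⟩ h
  simp only at h
  have habs : ∀ (s : ℝ) (m : Fin N), s = 1 ∨ s = -1 → |s * θ m| < Real.pi := by
    rintro s m (rfl | rfl) <;>
      simp [abs_mul, abs_of_pos (hθpos m)] <;> exact hθlt m
  have hsb : (if b then (1:ℝ) else -1) = 1 ∨ (if b then (1:ℝ) else -1) = -1 := by
    split <;> simp
  have hsb' : (if b' then (1:ℝ) else -1) = 1 ∨ (if b' then (1:ℝ) else -1) = -1 := by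
    split <;> simp
  have heq : (if b then (1:ℝ) else -1) * θ m = (if b' then (1:ℝ) else -1) * θ m' := by
    refine exp_I_inj_aux _ _ (habs _ m hsb) (habs _ m' hsb') ?_
    simp only [hθ]
    push_cast
    convert h using 2 <;> push_cast <;> ring
  cases b <;> cases b' <;> simp only [if_true, if_false, Bool.false_eq_true] at heq <;>
    simp only [Prod.mk.injEq]
  · exact ⟨hθinj m m' (by linarith), by trivial⟩
  · exact absurd heq (by nlinarith [hθpos m, hθpos m'])
  · exact absurd heq (by nlinarith [hθpos m, hθpos m'])
  · exact ⟨hθinj m m' (by linarith), by trivial⟩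

/-- **A `K`-sparse vector is determined by any `4K` consecutive entries of its DCT.**
If `c, c'` each have at most `K` nonzero entries, `4K ≤ N`, and `Ψ c` agrees with `Ψ c'` on a
block of `4K` consecutive indices contained in `{0, …, N-1}`, where `Ψ` is the `N × N` DCT
matrix, then `c = c'`. -/
theorem stmt18 (N K : ℕ) (hN : 1 ≤ N) (hK : 1 ≤ K) (hKN : 4 * K ≤ N)
    (c c' : Fin N → ℂ) (hc : l0 c ≤ K) (hc' : l0 c' ≤ K)
    (ℓ : ℕ) (hblock : ℓ + 4 * K ≤ N)
    (hagree : ∀ (j : ℕ) (hj : j < 4 * K),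
      (dct N).mulVec c ⟨ℓ + j, by omega⟩ = (dct N).mulVec c' ⟨ℓ + j, by omega⟩) :
    c = c' := by
  classical
  have hN0 : (0 : ℝ) < N := by exact_mod_cast hN
  set d : Fin N → ℂ := fun i => c i - c' i with hd
  suffices hd0 : ∀ i, d i = 0 by
    funext i
    have := hd0 i
    rw [hd] at this
    exact sub_eq_zero.mp this
  set θ : Fin N → ℝ := fun m => Real.pi * ((m : ℝ) + 1/2) / N with hθ
  set node : Fin N × Bool → ℂ := fun p =>
    Complex.exp (((if p.2 then (1:ℝ) else -1) *
      (Real.pi * ((p.1 : ℝ) + 1/2) / N)) * Complex.I) with hnode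
  have hnode_ne : ∀ p, node p ≠ 0 := fun p => Complex.exp_ne_zero _
  set eV : Fin N × Bool → ℂ := fun p => (d p.1 / 2) * node p ^ ℓ with heV
  -- support bound
  have hsub : Finset.univ.filter (fun m => d m ≠ 0) ⊆
      Finset.univ.filter (fun i => c i ≠ 0) ∪ Finset.univ.filter (fun i => c' i ≠ 0) := by
    intro i hi
    simp only [Finset.mem_filter, Finset.mem_univ, true_and, hd] at hi
    simp only [Finset.mem_union, Finset.mem_filter, Finset.mem_univ, true_and]
    by_contra hcon
    push_neg at hcon
    exact hi (by rw [hcon.1, hcon.2, sub_zero])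
  have hdcard : (Finset.univ.filter (fun m => d m ≠ 0)).card ≤ 2 * K := by
    calc (Finset.univ.filter (fun m => d m ≠ 0)).card
        ≤ (Finset.univ.filter (fun i => c i ≠ 0) ∪ Finset.univ.filter (fun i => c' i ≠ 0)).card :=
          Finset.card_le_card hsub
      _ ≤ (Finset.univ.filter (fun i => c i ≠ 0)).card +
          (Finset.univ.filter (fun i => c' i ≠ 0)).card := Finset.card_union_le _ _
      _ ≤ K + K := add_le_add hc hc'
      _ = 2 * K := by ring
  have hsub2 : Finset.univ.filter (fun p : Fin N × Bool => eV p ≠ 0) ⊆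
      (Finset.univ.filter (fun m => d m ≠ 0)) ×ˢ (Finset.univ : Finset Bool) := by
    rintro ⟨m, b⟩ hp
    rw [Finset.mem_filter] at hp
    rw [Finset.mem_product, Finset.mem_filter]
    refine ⟨⟨Finset.mem_univ _, fun hdm => hp.2 ?_⟩, Finset.mem_univ _⟩
    rw [heV]
    simp [hdm]
  have hecard : (Finset.univ.filter (fun p : Fin N × Bool => eV p ≠ 0)).card ≤ 4 * K := by
    calc (Finset.univ.filter (fun p : Fin N × Bool => eV p ≠ 0)).card
        ≤ ((Finset.univ.filter (fun m => d m ≠ 0)) ×ˢ (Finset.univ : Finset Bool)).card :=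
          Finset.card_le_card hsub2
      _ = (Finset.univ.filter (fun m => d m ≠ 0)).card * 2 := by
          rw [Finset.card_product]; simp
      _ ≤ (2 * K) * 2 := Nat.mul_le_mul_right _ hdcard
      _ = 4 * K := by ring
  -- the moment conditions
  have hrow : ∀ n, n < 4 * K → ∑ p : Fin N × Bool, eV p * node p ^ n = 0 := by
    intro j hj
    set n : Fin N := ⟨ℓ + j, by omega⟩ with hn
    have h1 := hagree j hj
    have h0 : ∑ m, dct N n m * d m = 0 := by
      simp only [Matrix.mulVec, dotProduct] at h1
      calc ∑ m, dct N n m * d m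
          = ∑ m, (dct N n m * c m - dct N n m * c' m) := by
            refine Finset.sum_congr rfl (fun m _ => ?_)
            rw [hd]; ring
        _ = ∑ m, dct N n m * c m - ∑ m, dct N n m * c' m := Finset.sum_sub_distrib _ _
        _ = 0 := by rw [h1]; ring
    set bn : ℝ := (if (n : ℕ) = 0 then 1 / Real.sqrt 2 else 1) * Real.sqrt (2 / N) with hbn
    have hbnne : (bn : ℂ) ≠ 0 := by
      have h2 : (0:ℝ) < Real.sqrt (2 / N) := Real.sqrt_pos.mpr (by positivity)
      have h3 : (0:ℝ) < bn := by
        rw [hbn]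
        split
        · have := Real.sqrt_pos.mpr (show (0:ℝ) < 2 by norm_num)
          positivity
        · simpa using h2
      exact_mod_cast ne_of_gt h3
    have hsplit : ∀ m : Fin N, dct N n m =
        (bn : ℂ) * ((Real.cos (Real.pi * (n : ℕ) * ((m : ℝ) + 1/2) / N) : ℝ) : ℂ) := by
      intro m
      rw [dct, hbn]
      push_cast
      ring
    have hcos0 : ∑ m, d m * ((Real.cos (Real.pi * (n : ℕ) * ((m : ℝ) + 1/2) / N) : ℝ) : ℂ) = 0 := by
      have hmul : (bn : ℂ) * ∑ m, d m *
          ((Real.cos (Real.pi * (n : ℕ) * ((m : ℝ) + 1/2) / N) : ℝ) : ℂ) = 0 := by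
        rw [Finset.mul_sum, ← h0]
        refine Finset.sum_congr rfl (fun m _ => ?_)
        rw [hsplit m]; ring
      rcases mul_eq_zero.mp hmul with h | h
      · exact absurd h hbnne
      · exact h
    have hcosnode : ∀ m : Fin N,
        ((Real.cos (Real.pi * (n : ℕ) * ((m : ℝ) + 1/2) / N) : ℝ) : ℂ) =
          (node (m, true) ^ (n : ℕ) + node (m, false) ^ (n : ℕ)) / 2 := by
      intro m
      have ht : node (m, true) ^ (n : ℕ)
          = Complex.exp (((((n : ℕ) : ℝ) * θ m : ℝ) : ℂ) * Complex.I) := by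
        rw [hnode, ← Complex.exp_nat_mul]
        congr 1
        simp only [hθ, ↓reduceIte]
        push_cast
        ring
      have hf : node (m, false) ^ (n : ℕ)
          = Complex.exp (-((((n : ℕ) : ℝ) * θ m : ℝ) : ℂ) * Complex.I) := by
        rw [hnode, ← Complex.exp_nat_mul]
        congr 1
        simp only [hθ, Bool.false_eq_true, ↓reduceIte]
        push_cast
        ring
      have harg : Real.pi * ((n : ℕ) : ℝ) * ((m : ℝ) + 1/2) / N
          = ((n : ℕ) : ℝ) * θ m := by
        rw [hθ]; ring
      rw [harg, Complex.ofReal_cos]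
      rw [ht, hf]
      rfl
    have hsum2 : ∑ p : Fin N × Bool, (d p.1 / 2) * node p ^ (n : ℕ) = 0 := by
      rw [Fintype.sum_prod_type]
      calc ∑ m : Fin N, ∑ b : Bool, (d m / 2) * node (m, b) ^ (n : ℕ)
          = ∑ m : Fin N, d m *
            ((Real.cos (Real.pi * (n : ℕ) * ((m : ℝ) + 1/2) / N) : ℝ) : ℂ) := by
            refine Finset.sum_congr rfl (fun m _ => ?_)
            rw [hcosnode m, Fintype.sum_bool]
            ring
        _ = 0 := hcos0
    calc ∑ p : Fin N × Bool, eV p * node p ^ j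
        = ∑ p : Fin N × Bool, (d p.1 / 2) * node p ^ (n : ℕ) := by
          refine Finset.sum_congr rfl (fun p _ => ?_)
          rw [heV]
          have hnj : (n : ℕ) = ℓ + j := rfl
          rw [hnj, pow_add]
          ring
      _ = 0 := hsum2
  have heV0 : ∀ p, eV p = 0 := aux_vand node (aux_nodes N hN) eV (4 * K) hecard hrow
  intro i
  have h1 := heV0 (i, true)
  rw [heV] at h1
  rcases mul_eq_zero.mp h1 with h | h
  · rcases div_eq_zero_iff.mp h with h | h
    · exact h
    · exact absurd h two_ne_zero
  · exact absurd h (pow_ne_zero _ (hnode_ne _))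
end
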